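/- Let 0 < α, β, γ, δ < 1 and let κ be the step standard kernel taking value α on [0,γ]², value β on (γ,1]², and value δ otherwise. Let λ > 0, and let π be a probability measure on [0,1] with density ν satisfying ν(x) = (λ/(1+α*)) ∫_0^1 κ(x,y) ν(y) dy for the Malthusian parameter α*, i.e. ν is the (normalised) positive eigenfunction of the integral operator with kernel κ corresponding to its largest eigenvalue. Set τ_P(γ) := π([0,γ]). Then τ_P(γ) = ((α+β)γ − β + s) / (2δ + γ(α − 2δ + β) − β + s), where s = sqrt( γ²((α+β)² − 4δ²) + 2γ(2δ² − αβ − β²) + β² ). -/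

import Mathlib

open MeasureTheory Filter
open scoped ENNReal Classical

noncomputable section

/-- The step kernel: value `α` on `[0,γ]²`, value `β` on `(γ,1]²`, and `δ` otherwise. -/
def stepKer (α β γ δ : ℝ) (x y : ℝ) : ℝ :=
  if x ≤ γ ∧ y ≤ γ then α else if γ < x ∧ γ < y then β else δ

/-- A quadratic with negative value at 0 and positive value at 1 has
at most one root in (0,1). -/
lemma sqrt_lt_aux {m P : ℝ} (hP : 0 < P) : m < Real.sqrt (m ^ 2 + P) := by
  rcases le_or_gt m 0 with h | h
  · exact h.trans_lt (Real.sqrt_pos.2 (by nlinarith))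
  · exact (Real.lt_sqrt h.le).2 (by nlinarith)

lemma quad_unique {A B C u v : ℝ} (hu0 : 0 < u) (hu1 : u < 1) (hv0 : 0 < v) (hv1 : v < 1)
    (h1 : A * u ^ 2 + B * u + C = 0) (h2 : A * v ^ 2 + B * v + C = 0)
    (hC : C < 0) (hS : 0 < A + B + C) : u = v := by
  by_contra h
  have hne : u - v ≠ 0 := sub_ne_zero.mpr h
  have hB : A * (u + v) + B = 0 := by
    have : (u - v) * (A * (u + v) + B) = 0 := by linear_combination h1 - h2
    rcases mul_eq_zero.1 this with h' | h'
    · exact absurd h' hne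
    · exact h'
  have hCA : C = A * (u * v) := by linear_combination h1 - u * hB
  have hA : A < 0 := by
    rcases lt_trichotomy A 0 with h' | h' | h'
    · exact h'
    · rw [h', zero_mul] at hCA; linarith
    · nlinarith [mul_pos hu0 hv0]
  nlinarith [mul_pos (sub_pos.2 hu1) (sub_pos.2 hv1)]

set_option maxHeartbeats 1000000 in
/-- for the step kernel with parameters `0 < α, β, γ, δ < 1`, if `π` is a
probability measure on `[0,1]` whose density `ν` is a nonnegative eigenfunction of the
integral operator with kernel `κ`, `ν(x) = (λ/(1+α*)) ∫_0^1 κ(x,y) ν(y) dy`, then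
`τ_P(γ) = π([0,γ]) = ((α+β)γ - β + s)/(2δ + γ(α - 2δ + β) - β + s)` where
`s = √(γ²((α+β)² - 4δ²) + 2γ(2δ² - αβ - β²) + β²)`. -/
theorem tauP_formula (α β γ δ : ℝ)
    (hα : α ∈ Set.Ioo (0:ℝ) 1) (hβ : β ∈ Set.Ioo (0:ℝ) 1)
    (hγ : γ ∈ Set.Ioo (0:ℝ) 1) (hδ : δ ∈ Set.Ioo (0:ℝ) 1)
    (lam : ℝ) (hlam : 0 < lam) (αs : ℝ) (hαs : -1 < αs)
    (ν : ℝ → ℝ) (hνmeas : Measurable ν) (hνnonneg : ∀ y, 0 ≤ ν y)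
    (heig : ∀ x ∈ Set.Icc (0:ℝ) 1,
      ν x = lam / (1 + αs) * ∫ y in Set.Icc (0:ℝ) 1, stepKer α β γ δ x y * ν y)
    (π : Measure ℝ)
    (hπ : π = (volume.restrict (Set.Icc (0:ℝ) 1)).withDensity
      fun y => ENNReal.ofReal (ν y))
    (hπprob : IsProbabilityMeasure π) :
    (π (Set.Icc (0:ℝ) γ)).toReal
      = ((α + β) * γ - β +
          Real.sqrt (γ ^ 2 * ((α + β) ^ 2 - 4 * δ ^ 2) +
            2 * γ * (2 * δ ^ 2 - α * β - β ^ 2) + β ^ 2)) /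
        (2 * δ + γ * (α - 2 * δ + β) - β +
          Real.sqrt (γ ^ 2 * ((α + β) ^ 2 - 4 * δ ^ 2) +
            2 * γ * (2 * δ ^ 2 - α * β - β ^ 2) + β ^ 2)) := by
  obtain ⟨hα0, hα1⟩ := hα
  obtain ⟨hβ0, hβ1⟩ := hβ
  obtain ⟨hγ0, hγ1⟩ := hγ
  obtain ⟨hδ0, hδ1⟩ := hδ
  set c := lam / (1 + αs) with hcdef
  have hc : 0 < c := div_pos hlam (by linarith)
  set a := ν 0 with hadef
  set b := ν 1 with hbdef
  have hsub : Set.Icc (0:ℝ) γ ⊆ Set.Icc (0:ℝ) 1 := Set.Icc_subset_Icc le_rfl hγ1.le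
  have hsub' : Set.Ioc γ (1:ℝ) ⊆ Set.Icc (0:ℝ) 1 :=
    fun x hx => ⟨le_trans hγ0.le hx.1.le, hx.2⟩
  -- ν is constant on the two pieces
  have hva : ∀ x ∈ Set.Icc (0:ℝ) γ, ν x = a := by
    intro x hx
    have h0 : (0:ℝ) ∈ Set.Icc (0:ℝ) 1 := ⟨le_rfl, by norm_num⟩
    rw [heig x (hsub hx), hadef, heig 0 h0]
    have hker : (fun y => stepKer α β γ δ x y * ν y)
        = (fun y => stepKer α β γ δ 0 y * ν y) := by
      funext y
      simp [stepKer, hx.2, hγ0.le, not_lt.mpr hx.2, not_lt.mpr hγ0.le]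
    rw [hker]
  have hvb : ∀ x ∈ Set.Ioc γ (1:ℝ), ν x = b := by
    intro x hx
    have h1 : (1:ℝ) ∈ Set.Icc (0:ℝ) 1 := ⟨by norm_num, le_rfl⟩
    rw [heig x (hsub' hx), hbdef, heig 1 h1]
    have hker : (fun y => stepKer α β γ δ x y * ν y)
        = (fun y => stepKer α β γ δ 1 y * ν y) := by
      funext y
      simp [stepKer, hx.1, hγ1, not_le.mpr hx.1, not_le.mpr hγ1]
    rw [hker]
  have hdisj : Disjoint (Set.Icc (0:ℝ) γ) (Set.Ioc γ 1) :=
    Set.disjoint_left.mpr fun x hx hx' => absurd hx.2 (not_le.mpr hx'.1)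
  have hunion : Set.Icc (0:ℝ) 1 = Set.Icc 0 γ ∪ Set.Ioc γ 1 :=
    (Set.Icc_union_Ioc_eq_Icc hγ0.le hγ1.le).symm
  -- splitting set integrals of piecewise constants
  have hsplit : ∀ (f : ℝ → ℝ) (k1 k2 : ℝ),
      Set.EqOn f (fun _ => k1) (Set.Icc 0 γ) → Set.EqOn f (fun _ => k2) (Set.Ioc γ 1) →
      ∫ y in Set.Icc (0:ℝ) 1, f y = γ * k1 + (1 - γ) * k2 := by
    intro f k1 k2 h1 h2
    have m1 : volume (Set.Icc (0:ℝ) γ) ≠ ⊤ := by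
      rw [Real.volume_Icc]; exact ENNReal.ofReal_ne_top
    have m2 : volume (Set.Ioc γ (1:ℝ)) ≠ ⊤ := by
      rw [Real.volume_Ioc]; exact ENNReal.ofReal_ne_top
    have i1 : IntegrableOn f (Set.Icc 0 γ) :=
      ((integrableOn_const m1) :
        IntegrableOn (fun _ => k1) _ _).congr_fun h1.symm measurableSet_Icc
    have i2 : IntegrableOn f (Set.Ioc γ 1) :=
      ((integrableOn_const m2) :
        IntegrableOn (fun _ => k2) _ _).congr_fun h2.symm measurableSet_Ioc
    rw [hunion, setIntegral_union hdisj measurableSet_Ioc i1 i2,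
      setIntegral_congr_fun measurableSet_Icc h1,
      setIntegral_congr_fun measurableSet_Ioc h2,
      setIntegral_const, setIntegral_const, Real.volume_real_Icc_of_le hγ0.le,
      Real.volume_real_Ioc_of_le hγ1.le, sub_zero]
    simp [smul_eq_mul]
  -- the two eigen-equations
  have eig1 : a = c * (α * (γ * a) + δ * ((1 - γ) * b)) := by
    have h0 : (0:ℝ) ∈ Set.Icc (0:ℝ) 1 := ⟨le_rfl, by norm_num⟩
    conv_lhs => rw [hadef, heig 0 h0]
    rw [hsplit (fun y => stepKer α β γ δ 0 y * ν y) (α * a) (δ * b)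
        (fun y hy => by simp [stepKer, hγ0.le, hy.2, hva y hy])
        (fun y hy => by
          simp [stepKer, not_le.mpr hy.1, not_lt.mpr hγ0.le, hvb y hy])]
    ring
  have eig2 : b = c * (δ * (γ * a) + β * ((1 - γ) * b)) := by
    have h1 : (1:ℝ) ∈ Set.Icc (0:ℝ) 1 := ⟨by norm_num, le_rfl⟩
    conv_lhs => rw [hbdef, heig 1 h1]
    rw [hsplit (fun y => stepKer α β γ δ 1 y * ν y) (δ * a) (β * b)
        (fun y hy => by
          simp [stepKer, not_le.mpr hγ1, not_lt.mpr hy.2, hva y hy])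
        (fun y hy => by
          simp [stepKer, not_le.mpr hγ1, hγ1, hy.1, hvb y hy])]
    ring
  -- total mass
  have hmass : γ * a + (1 - γ) * b = 1 := by
    have h1 : π Set.univ = 1 := measure_univ
    rw [hπ, withDensity_apply _ MeasurableSet.univ, Measure.restrict_univ] at h1
    have : (∫⁻ y in Set.Icc (0:ℝ) 1, ENNReal.ofReal (ν y))
        = ENNReal.ofReal (γ * a + (1 - γ) * b) := by
      rw [hunion, lintegral_union measurableSet_Ioc hdisj,
        setLIntegral_congr_fun measurableSet_Icc
          (fun y hy => by rw [hva y hy]),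
        setLIntegral_congr_fun measurableSet_Ioc
          (fun y hy => by rw [hvb y hy]),
        setLIntegral_const, setLIntegral_const, Real.volume_Icc, Real.volume_Ioc, sub_zero,
        ← ENNReal.ofReal_mul (hνnonneg 0), ← ENNReal.ofReal_mul (hνnonneg 1),
        ← ENNReal.ofReal_add (mul_nonneg (hνnonneg 0) hγ0.le)
          (mul_nonneg (hνnonneg 1) (by linarith)),
        mul_comm a γ, mul_comm b (1 - γ)]
    rw [this] at h1
    have := (ENNReal.ofReal_eq_one.mp h1)
    linarith
  -- the value of the measure of [0,γ]
  have hT : (π (Set.Icc (0:ℝ) γ)).toReal = γ * a := by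
    rw [hπ, withDensity_apply _ measurableSet_Icc,
      Measure.restrict_restrict measurableSet_Icc, Set.inter_eq_left.mpr hsub,
      setLIntegral_congr_fun measurableSet_Icc
        (fun y hy => by rw [hva y hy]),
      setLIntegral_const, Real.volume_Icc, sub_zero,
      ← ENNReal.ofReal_mul (hνnonneg 0),
      ENNReal.toReal_ofReal (mul_nonneg (hνnonneg 0) hγ0.le)]
    ring
  have hann : 0 ≤ a := hνnonneg 0
  have hbnn : 0 ≤ b := hνnonneg 1
  -- positivity of a and b
  have ha0 : 0 < a := by
    by_contra h
    have ha' : a = 0 := le_antisymm (not_lt.mp h) hann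
    rw [ha'] at eig1 hmass
    nlinarith [mul_pos hc hδ0]
  have hb0 : 0 < b := by
    by_contra h
    have hb' : b = 0 := le_antisymm (not_lt.mp h) hbnn
    rw [hb'] at eig2 hmass
    nlinarith [mul_pos hc hδ0]
  -- the quadratic satisfied by T = γ a
  have cross : a * (δ * (γ * a) + β * ((1 - γ) * b))
      = b * (α * (γ * a) + δ * ((1 - γ) * b)) := by
    linear_combination (δ * (γ * a) + β * ((1 - γ) * b)) * eig1
      - (α * (γ * a) + δ * ((1 - γ) * b)) * eig2
  have hquad : ((1 - γ) * (δ - β) + γ * (α - δ)) * (γ * a) ^ 2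
      + ((1 - γ) * β - γ * (α - 2 * δ)) * (γ * a) + (-(γ * δ)) = 0 := by
    linear_combination (γ * (1 - γ)) * cross
      + ((γ * α - (1 - γ) * β) * (γ * a) + γ * δ * (1 - γ * a + (1 - γ) * b)) * hmass
  have hT1 : γ * a < 1 := by nlinarith [mul_pos (sub_pos.2 hγ1) hb0]
  rw [hT]
  have haT : 0 < γ * a := mul_pos hγ0 ha0
  clear_value a b c
  clear heig hva hvb hsplit hπ hπprob hνmeas hνnonneg hmass hsub hsub' hdisj hunion
    eig1 eig2 cross hc hcdef hadef hbdef hann hbnn ha0 hb0 hT hlam hαs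
  -- now the explicit root
  obtain ⟨E, hEdef⟩ : ∃ E : ℝ, γ ^ 2 * ((α + β) ^ 2 - 4 * δ ^ 2) +
      2 * γ * (2 * δ ^ 2 - α * β - β ^ 2) + β ^ 2 = E := ⟨_, rfl⟩
  rw [hEdef]
  obtain ⟨s, hsdef⟩ : ∃ s : ℝ, Real.sqrt E = s := ⟨_, rfl⟩
  rw [hsdef]
  have hE : 0 ≤ E := by
    rw [← hEdef]
    nlinarith [sq_nonneg (β - (α + β) * γ),
      mul_pos (mul_pos hγ0 (sub_pos.2 hγ1)) (mul_pos hδ0 hδ0)]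
  have hs2 : s ^ 2 = γ ^ 2 * ((α + β) ^ 2 - 4 * δ ^ 2) +
      2 * γ * (2 * δ ^ 2 - α * β - β ^ 2) + β ^ 2 := by
    rw [← hsdef, Real.sq_sqrt hE, ← hEdef]
  have hs0 : 0 ≤ s := hsdef ▸ Real.sqrt_nonneg _
  have hN : 0 < (α + β) * γ - β + s := by
    have hmlt : β - (α + β) * γ < s := by
      rw [← hsdef, show E = (β - (α + β) * γ) ^ 2 + 4 * γ * (1 - γ) * δ ^ 2 by
        rw [← hEdef]; ring]
      exact sqrt_lt_aux
        (by nlinarith [mul_pos (mul_pos hγ0 (sub_pos.2 hγ1)) (mul_pos hδ0 hδ0)])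
    linarith
  have hD : 0 < 2 * δ + γ * (α - 2 * δ + β) - β + s := by
    nlinarith [mul_pos hδ0 (sub_pos.2 hγ1)]
  have key : ((1 - γ) * (δ - β) + γ * (α - δ)) * ((α + β) * γ - β + s) ^ 2
      + ((1 - γ) * β - γ * (α - 2 * δ)) *
        (((α + β) * γ - β + s) * (2 * δ + γ * (α - 2 * δ + β) - β + s))
      + (-(γ * δ)) * (2 * δ + γ * (α - 2 * δ + β) - β + s) ^ 2 = 0 := by
    linear_combination (δ * (1 - γ)) * hs2
  have hroot : ((1 - γ) * (δ - β) + γ * (α - δ)) *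
        (((α + β) * γ - β + s) / (2 * δ + γ * (α - 2 * δ + β) - β + s)) ^ 2
      + ((1 - γ) * β - γ * (α - 2 * δ)) *
        (((α + β) * γ - β + s) / (2 * δ + γ * (α - 2 * δ + β) - β + s))
      + (-(γ * δ)) = 0 := by
    have hD' : 2 * δ + γ * (α - 2 * δ + β) - β + s ≠ 0 := ne_of_gt hD
    have expand : ((1 - γ) * (δ - β) + γ * (α - δ)) *
          (((α + β) * γ - β + s) / (2 * δ + γ * (α - 2 * δ + β) - β + s)) ^ 2
        + ((1 - γ) * β - γ * (α - 2 * δ)) *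
          (((α + β) * γ - β + s) / (2 * δ + γ * (α - 2 * δ + β) - β + s))
        + (-(γ * δ))
        = (((1 - γ) * (δ - β) + γ * (α - δ)) * ((α + β) * γ - β + s) ^ 2
          + ((1 - γ) * β - γ * (α - 2 * δ)) *
            (((α + β) * γ - β + s) * (2 * δ + γ * (α - 2 * δ + β) - β + s))
          + (-(γ * δ)) * (2 * δ + γ * (α - 2 * δ + β) - β + s) ^ 2)
          / (2 * δ + γ * (α - 2 * δ + β) - β + s) ^ 2 := by
      rw [eq_div_iff (pow_ne_zero 2 hD')]
      have hx := div_mul_cancel₀ ((α + β) * γ - β + s) hD'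
      linear_combination (((1 - γ) * (δ - β) + γ * (α - δ)) *
          (((α + β) * γ - β + s) / (2 * δ + γ * (α - 2 * δ + β) - β + s) *
            (2 * δ + γ * (α - 2 * δ + β) - β + s) + ((α + β) * γ - β + s))
        + ((1 - γ) * β - γ * (α - 2 * δ)) * (2 * δ + γ * (α - 2 * δ + β) - β + s)) * hx
    rw [expand, key, zero_div]
  exact quad_unique haT hT1 (div_pos hN hD)
    ((div_lt_one hD).2 (by nlinarith [mul_pos hδ0 (sub_pos.2 hγ1)]))
    hquad hroot (by nlinarith [mul_pos hγ0 hδ0])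
    (by nlinarith [mul_pos hδ0 (sub_pos.2 hγ1)])
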